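/- Let R, S ⊆ {1,…,n} be disjoint sets of indices and let δ = δ_{|R|+|S|} be the (|R|+|S|)-th restricted isometry constant of A, assumed to satisfy δ < 1. Then for every x ∈ ℝ^{|S|}, ‖A_Rᵀ A_S x‖₂ ≤ δ ‖x‖₂, where A_R and A_S denote the submatrices of A formed by the columns indexed by R and S respectively. -/

import Mathlib

noncomputable section
open Finset Matrix

/-- Support of a vector as a finite set of indices. -/
def spt {d : ℕ} (x : Fin d → ℝ) : Finset (Fin d) :=
  Finset.univ.filter (fun i => x i ≠ 0)

/-- Euclidean (ℓ²) norm of a vector. -/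
def l2norm {d : ℕ} (v : Fin d → ℝ) : ℝ :=
  Real.sqrt (∑ i, (v i) ^ 2)

/-- Sup (ℓ∞) norm of a vector. -/
def supNorm {d : ℕ} (v : Fin d → ℝ) : ℝ :=
  ⨆ i, |v i|

/-- The `l`-th restricted isometry constant of `A`: the smallest `δ ≥ 0` such that
`(1-δ)‖x‖₂² ≤ ‖Ax‖₂² ≤ (1+δ)‖x‖₂²` for every `x` with at most `l` nonzero entries. -/
def ripConst {m n : ℕ} (A : Matrix (Fin m) (Fin n) ℝ) (l : ℕ) : ℝ :=
  sInf {δ : ℝ | 0 ≤ δ ∧ ∀ x : Fin n → ℝ, (spt x).card ≤ l →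
    (1 - δ) * ∑ i, (x i) ^ 2 ≤ ∑ j, (A.mulVec x j) ^ 2 ∧
    ∑ j, (A.mulVec x j) ^ 2 ≤ (1 + δ) * ∑ i, (x i) ^ 2}

lemma rip_set_nonempty {m n : ℕ} (A : Matrix (Fin m) (Fin n) ℝ) (l : ℕ) :
    Set.Nonempty {δ : ℝ | 0 ≤ δ ∧ ∀ x : Fin n → ℝ, (spt x).card ≤ l →
    (1 - δ) * ∑ i, (x i) ^ 2 ≤ ∑ j, (A.mulVec x j) ^ 2 ∧
    ∑ j, (A.mulVec x j) ^ 2 ≤ (1 + δ) * ∑ i, (x i) ^ 2} := by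
  set C : ℝ := ∑ j, ∑ i, (A j i) ^ 2 with hC
  have hC0 : 0 ≤ C := Finset.sum_nonneg fun j _ =>
    Finset.sum_nonneg fun i _ => sq_nonneg _
  refine ⟨1 + C, by linarith, fun x _ => ?_⟩
  have hX0 : (0:ℝ) ≤ ∑ i, (x i) ^ 2 := Finset.sum_nonneg fun i _ => sq_nonneg _
  have hAx : (0:ℝ) ≤ ∑ j, (A.mulVec x j) ^ 2 := Finset.sum_nonneg fun j _ => sq_nonneg _
  constructor
  · have : (1 - (1 + C)) * ∑ i, (x i) ^ 2 ≤ 0 := by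
      apply mul_nonpos_of_nonpos_of_nonneg _ hX0
      linarith
    linarith
  · have hstep : ∑ j, (A.mulVec x j) ^ 2 ≤ C * ∑ i, (x i) ^ 2 := by
      rw [hC, Finset.sum_mul]
      refine Finset.sum_le_sum fun j _ => ?_
      have := Finset.sum_mul_sq_le_sq_mul_sq Finset.univ (fun i => A j i) x
      simpa [Matrix.mulVec, dotProduct] using this
    have : C * ∑ i, (x i) ^ 2 ≤ (1 + (1 + C)) * ∑ i, (x i) ^ 2 := by
      apply mul_le_mul_of_nonneg_right _ hX0
      linarith
    linarith

lemma cross_bound {m n : ℕ} (A : Matrix (Fin m) (Fin n) ℝ) (l : ℕ) (δ : ℝ)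
    (hδ0 : 0 ≤ δ)
    (hP : ∀ x : Fin n → ℝ, (spt x).card ≤ l →
      (1 - δ) * ∑ i, (x i) ^ 2 ≤ ∑ j, (A.mulVec x j) ^ 2 ∧
      ∑ j, (A.mulVec x j) ^ 2 ≤ (1 + δ) * ∑ i, (x i) ^ 2)
    (R S : Finset (Fin n)) (hRS : Disjoint R S) (hl : R.card + S.card ≤ l)
    (u v : Fin n → ℝ) (hu : ∀ i, i ∉ R → u i = 0) (hv : ∀ i, i ∉ S → v i = 0) :
    ∑ j, (A.mulVec u j) * (A.mulVec v j) ≤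
      δ * Real.sqrt (∑ i, (u i) ^ 2) * Real.sqrt (∑ i, (v i) ^ 2) := by
  have key : ∀ u v : Fin n → ℝ, (∀ i, i ∉ R → u i = 0) → (∀ i, i ∉ S → v i = 0) →
      ∑ j, (A.mulVec u j) * (A.mulVec v j) ≤
        δ / 2 * ((∑ i, (u i) ^ 2) + ∑ i, (v i) ^ 2) := by
    intro u v hu hv
    have hcard : ∀ w : Fin n → ℝ, (∀ i, w i ≠ 0 → i ∈ R ∪ S) → (spt w).card ≤ l := by
      intro w hw
      have hsub : spt w ⊆ R ∪ S := by
        intro i hi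
        simp only [spt, Finset.mem_filter] at hi
        exact hw i hi.2
      calc (spt w).card ≤ (R ∪ S).card := Finset.card_le_card hsub
        _ = R.card + S.card := Finset.card_union_of_disjoint hRS
        _ ≤ l := hl
    have hcross0 : ∑ i, u i * v i = 0 := by
      refine Finset.sum_eq_zero fun i _ => ?_
      by_cases h : i ∈ R
      · rw [hv i (Finset.disjoint_left.mp hRS h), mul_zero]
      · rw [hu i h, zero_mul]
    have hsum_add : ∑ i, (u i + v i) ^ 2 = (∑ i, (u i) ^ 2) + ∑ i, (v i) ^ 2 := by
      have h : ∑ i, (u i + v i) ^ 2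
          = ∑ i, ((u i) ^ 2 + (v i) ^ 2 + 2 * (u i * v i)) :=
        Finset.sum_congr rfl fun i _ => by ring
      rw [h, Finset.sum_add_distrib, Finset.sum_add_distrib, ← Finset.mul_sum, hcross0]
      ring
    have hsum_sub : ∑ i, (u i - v i) ^ 2 = (∑ i, (u i) ^ 2) + ∑ i, (v i) ^ 2 := by
      have h : ∑ i, (u i - v i) ^ 2
          = ∑ i, ((u i) ^ 2 + (v i) ^ 2 - 2 * (u i * v i)) :=
        Finset.sum_congr rfl fun i _ => by ring
      rw [h, Finset.sum_sub_distrib, Finset.sum_add_distrib, ← Finset.mul_sum, hcross0]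
      ring
    have h1 := (hP (u + v) (hcard _ fun i hi => by
      by_cases h : i ∈ R
      · exact Finset.mem_union_left _ h
      · by_cases h' : i ∈ S
        · exact Finset.mem_union_right _ h'
        · exact absurd (by simp [Pi.add_apply, hu i h, hv i h']) hi)).2
    have h2 := (hP (u - v) (hcard _ fun i hi => by
      by_cases h : i ∈ R
      · exact Finset.mem_union_left _ h
      · by_cases h' : i ∈ S
        · exact Finset.mem_union_right _ h'
        · exact absurd (by simp [Pi.sub_apply, hu i h, hv i h']) hi)).1
    have hid : ∑ j, (A.mulVec (u + v) j) ^ 2 - ∑ j, (A.mulVec (u - v) j) ^ 2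
        = 4 * ∑ j, (A.mulVec u j) * (A.mulVec v j) := by
      rw [← Finset.sum_sub_distrib, Finset.mul_sum]
      refine Finset.sum_congr rfl fun j _ => ?_
      simp only [Matrix.mulVec_add, Matrix.mulVec_sub, Pi.add_apply, Pi.sub_apply]
      ring
    simp only [Pi.add_apply] at h1
    simp only [Pi.sub_apply] at h2
    rw [hsum_add] at h1
    rw [hsum_sub] at h2
    nlinarith [hid, h1, h2]
  -- scaling step
  have hU0 : (0:ℝ) ≤ ∑ i, (u i) ^ 2 := Finset.sum_nonneg fun i _ => sq_nonneg _
  have hV0 : (0:ℝ) ≤ ∑ i, (v i) ^ 2 := Finset.sum_nonneg fun i _ => sq_nonneg _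
  by_cases hU : ∑ i, (u i) ^ 2 = 0
  · have hu0 : u = 0 := by
      funext i
      have h := (Finset.sum_eq_zero_iff_of_nonneg
        (fun i (_ : i ∈ Finset.univ) => sq_nonneg (u i))).mp hU i (Finset.mem_univ i)
      exact pow_eq_zero_iff two_ne_zero |>.mp h
    rw [hu0]
    simp [Matrix.mulVec_zero]
  · by_cases hV : ∑ i, (v i) ^ 2 = 0
    · have hv0 : v = 0 := by
        funext i
        have h := (Finset.sum_eq_zero_iff_of_nonneg
          (fun i (_ : i ∈ Finset.univ) => sq_nonneg (v i))).mp hV i (Finset.mem_univ i)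
        exact pow_eq_zero_iff two_ne_zero |>.mp h
      rw [hv0]
      simp [Matrix.mulVec_zero]
    · have hUpos : 0 < ∑ i, (u i) ^ 2 := lt_of_le_of_ne hU0 (Ne.symm hU)
      have hVpos : 0 < ∑ i, (v i) ^ 2 := lt_of_le_of_ne hV0 (Ne.symm hV)
      have hsupos : 0 < Real.sqrt (∑ i, (u i) ^ 2) := Real.sqrt_pos.mpr hUpos
      have hsvpos : 0 < Real.sqrt (∑ i, (v i) ^ 2) := Real.sqrt_pos.mpr hVpos
      set c : ℝ := Real.sqrt (∑ i, (v i) ^ 2) / Real.sqrt (∑ i, (u i) ^ 2) with hc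
      have hcpos : 0 < c := div_pos hsvpos hsupos
      have hkey := key (fun i => c * u i) v (fun i hi => by show c * u i = 0; rw [hu i hi, mul_zero]) hv
      beta_reduce at hkey
      have hsum1 : ∑ j, (A.mulVec (fun i => c * u i) j) * (A.mulVec v j)
          = c * ∑ j, (A.mulVec u j) * (A.mulVec v j) := by
        rw [Finset.mul_sum]
        refine Finset.sum_congr rfl fun j _ => ?_
        have hAu : A.mulVec (fun i => c * u i) j = c * A.mulVec u j := by
          simp only [Matrix.mulVec, dotProduct, Finset.mul_sum]
          exact Finset.sum_congr rfl fun i _ => by ring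
        rw [hAu]; ring
      have hsum2 : ∑ i, (c * u i) ^ 2 = ∑ i, (v i) ^ 2 := by
        have h : ∑ i, (c * u i) ^ 2 = c ^ 2 * ∑ i, (u i) ^ 2 := by
          rw [Finset.mul_sum]
          exact Finset.sum_congr rfl fun i _ => by ring
        rw [h, hc, div_pow, Real.sq_sqrt hV0, Real.sq_sqrt hU0]
        field_simp
      rw [hsum1, hsum2] at hkey
      -- hkey : c * T ≤ δ / 2 * (V + V)
      have hcc : Real.sqrt (∑ i, (u i) ^ 2) * c = Real.sqrt (∑ i, (v i) ^ 2) := by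
        rw [hc]; field_simp
      have hkey2 : Real.sqrt (∑ i, (v i) ^ 2) * ∑ j, (A.mulVec u j) * (A.mulVec v j)
          ≤ δ * (∑ i, (v i) ^ 2) * Real.sqrt (∑ i, (u i) ^ 2) := by
        have h3 := mul_le_mul_of_nonneg_left hkey (Real.sqrt_nonneg (∑ i, (u i) ^ 2))
        have heq : Real.sqrt (∑ i, (u i) ^ 2) * (c * ∑ j, (A.mulVec u j) * (A.mulVec v j))
            = Real.sqrt (∑ i, (v i) ^ 2) * ∑ j, (A.mulVec u j) * (A.mulVec v j) := by
          linear_combination (∑ j, (A.mulVec u j) * (A.mulVec v j)) * hcc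
        calc Real.sqrt (∑ i, (v i) ^ 2) * ∑ j, (A.mulVec u j) * (A.mulVec v j)
            = Real.sqrt (∑ i, (u i) ^ 2) * (c * ∑ j, (A.mulVec u j) * (A.mulVec v j)) :=
              heq.symm
          _ ≤ Real.sqrt (∑ i, (u i) ^ 2) * (δ / 2 * ((∑ i, (v i) ^ 2) + ∑ i, (v i) ^ 2)) := h3
          _ = δ * (∑ i, (v i) ^ 2) * Real.sqrt (∑ i, (u i) ^ 2) := by ring
      have hvv : Real.sqrt (∑ i, (v i) ^ 2) * Real.sqrt (∑ i, (v i) ^ 2)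
          = ∑ i, (v i) ^ 2 := Real.mul_self_sqrt hV0
      have hrew : Real.sqrt (∑ i, (v i) ^ 2) *
            (δ * Real.sqrt (∑ i, (u i) ^ 2) * Real.sqrt (∑ i, (v i) ^ 2))
          = δ * (∑ i, (v i) ^ 2) * Real.sqrt (∑ i, (u i) ^ 2) := by
        linear_combination (δ * Real.sqrt (∑ i, (u i) ^ 2)) * hvv
      have := hkey2.trans_eq hrew.symm
      exact (mul_le_mul_iff_right₀ hsvpos).mp this

lemma per_delta {m n : ℕ} (A : Matrix (Fin m) (Fin n) ℝ)
    (R S : Finset (Fin n)) (hRS : Disjoint R S)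
    (x : Fin n → ℝ) (hx : ∀ i, i ∉ S → x i = 0) (δ : ℝ) (hδ0 : 0 ≤ δ)
    (hP : ∀ z : Fin n → ℝ, (spt z).card ≤ R.card + S.card →
      (1 - δ) * ∑ i, (z i) ^ 2 ≤ ∑ j, (A.mulVec z j) ^ 2 ∧
      ∑ j, (A.mulVec z j) ^ 2 ≤ (1 + δ) * ∑ i, (z i) ^ 2) :
    Real.sqrt (∑ i ∈ R, (Aᵀ.mulVec (A.mulVec x) i) ^ 2) ≤
      δ * Real.sqrt (∑ i, (x i) ^ 2) := by
  set w : Fin n → ℝ := Aᵀ.mulVec (A.mulVec x) with hw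
  set y : Fin n → ℝ := fun i => if i ∈ R then w i else 0 with hy
  have hyR : ∀ i, i ∉ R → y i = 0 := fun i h => if_neg h
  have hY : ∑ i, (y i) ^ 2 = ∑ i ∈ R, (w i) ^ 2 := by
    calc ∑ i, (y i) ^ 2 = ∑ i, (if i ∈ R then (w i) ^ 2 else 0) :=
          Finset.sum_congr rfl fun i _ => by by_cases h : i ∈ R <;> simp [hy, h]
      _ = ∑ i ∈ Finset.univ ∩ R, (w i) ^ 2 := Finset.sum_ite_mem _ _ _
      _ = ∑ i ∈ R, (w i) ^ 2 := by rw [Finset.univ_inter]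
  have hinner : ∑ j, (A.mulVec y j) * (A.mulVec x j) = ∑ i, y i * w i := by
    have hwi : ∀ i, w i = ∑ j, A j i * (A.mulVec x j) := by
      intro i
      simp only [hw, Matrix.mulVec, dotProduct, Matrix.transpose_apply]
    calc ∑ j, (A.mulVec y j) * (A.mulVec x j)
        = ∑ j, ∑ i, (A j i * y i) * (A.mulVec x j) := by
          refine Finset.sum_congr rfl fun j _ => ?_
          rw [show A.mulVec y j = ∑ i, A j i * y i from by
            simp [Matrix.mulVec, dotProduct], Finset.sum_mul]
      _ = ∑ i, ∑ j, (A j i * y i) * (A.mulVec x j) := Finset.sum_comm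
      _ = ∑ i, y i * w i := by
          refine Finset.sum_congr rfl fun i _ => ?_
          rw [hwi i, Finset.mul_sum]
          exact Finset.sum_congr rfl fun j _ => by ring
  have hyw : ∑ i, y i * w i = ∑ i ∈ R, (w i) ^ 2 := by
    calc ∑ i, y i * w i = ∑ i, (if i ∈ R then (w i) ^ 2 else 0) :=
          Finset.sum_congr rfl fun i _ => by by_cases h : i ∈ R <;> simp [hy, h, sq]
      _ = ∑ i ∈ Finset.univ ∩ R, (w i) ^ 2 := Finset.sum_ite_mem _ _ _
      _ = ∑ i ∈ R, (w i) ^ 2 := by rw [Finset.univ_inter]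
  have hcross := cross_bound A (R.card + S.card) δ hδ0 hP R S hRS le_rfl y x hyR hx
  rw [hinner, hyw, hY] at hcross
  -- hcross : ∑ i ∈ R, w i ^2 ≤ δ * √(∑ i ∈ R, w i ^2) * √(∑ x²)
  have hYnn : (0:ℝ) ≤ ∑ i ∈ R, (w i) ^ 2 := Finset.sum_nonneg fun i _ => sq_nonneg _
  by_cases hY0 : ∑ i ∈ R, (w i) ^ 2 = 0
  · rw [hY0, Real.sqrt_zero]
    exact mul_nonneg hδ0 (Real.sqrt_nonneg _)
  · have hYpos : 0 < ∑ i ∈ R, (w i) ^ 2 := lt_of_le_of_ne hYnn (Ne.symm hY0)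
    have hsY : 0 < Real.sqrt (∑ i ∈ R, (w i) ^ 2) := Real.sqrt_pos.mpr hYpos
    have hself : Real.sqrt (∑ i ∈ R, (w i) ^ 2) * Real.sqrt (∑ i ∈ R, (w i) ^ 2)
        = ∑ i ∈ R, (w i) ^ 2 := Real.mul_self_sqrt hYnn
    have h2 : Real.sqrt (∑ i ∈ R, (w i) ^ 2) * Real.sqrt (∑ i ∈ R, (w i) ^ 2)
        ≤ Real.sqrt (∑ i ∈ R, (w i) ^ 2) * (δ * Real.sqrt (∑ i, (x i) ^ 2)) := by
      rw [hself]
      calc ∑ i ∈ R, (w i) ^ 2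
          ≤ δ * Real.sqrt (∑ i ∈ R, (w i) ^ 2) * Real.sqrt (∑ i, (x i) ^ 2) := hcross
        _ = Real.sqrt (∑ i ∈ R, (w i) ^ 2) * (δ * Real.sqrt (∑ i, (x i) ^ 2)) := by ring
    exact (mul_le_mul_iff_right₀ hsY).mp h2

/-- RIP Fact 2: for disjoint index sets `R, S` and any `x` supported in `S`,
`‖A_Rᵀ A_S x‖₂ ≤ δ_{|R|+|S|} ‖x‖₂`. -/
theorem rip_disjoint_cross_bound {m n : ℕ} (hm : 0 < m) (hn : 0 < n)
    (A : Matrix (Fin m) (Fin n) ℝ)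
    (R S : Finset (Fin n)) (hRS : Disjoint R S)
    (hδ : ripConst A (R.card + S.card) < 1)
    (x : Fin n → ℝ) (hx : ∀ i, i ∉ S → x i = 0) :
    Real.sqrt (∑ i ∈ R, (Aᵀ.mulVec (A.mulVec x) i) ^ 2) ≤
      ripConst A (R.card + S.card) * l2norm x := by
  have hX0 : (0:ℝ) ≤ ∑ i, (x i) ^ 2 := Finset.sum_nonneg fun i _ => sq_nonneg _
  by_cases hX : ∑ i, (x i) ^ 2 = 0
  · have hx0 : x = 0 := by
      funext i
      have h := (Finset.sum_eq_zero_iff_of_nonneg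
        (fun i (_ : i ∈ Finset.univ) => sq_nonneg (x i))).mp hX i (Finset.mem_univ i)
      exact pow_eq_zero_iff two_ne_zero |>.mp h
    rw [hx0]
    simp [Matrix.mulVec_zero, l2norm]
  · have hXpos : 0 < ∑ i, (x i) ^ 2 := lt_of_le_of_ne hX0 (Ne.symm hX)
    have hsX : 0 < Real.sqrt (∑ i, (x i) ^ 2) := Real.sqrt_pos.mpr hXpos
    have hne := rip_set_nonempty A (R.card + S.card)
    have hdiv : Real.sqrt (∑ i ∈ R, (Aᵀ.mulVec (A.mulVec x) i) ^ 2) /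
        Real.sqrt (∑ i, (x i) ^ 2) ≤ ripConst A (R.card + S.card) := by
      refine le_csInf hne fun δ' hδ' => ?_
      obtain ⟨hδ'0, hP⟩ := hδ'
      rw [div_le_iff₀ hsX]
      exact per_delta A R S hRS x hx δ' hδ'0 hP
    have := (div_le_iff₀ hsX).mp hdiv
    calc Real.sqrt (∑ i ∈ R, (Aᵀ.mulVec (A.mulVec x) i) ^ 2)
        ≤ ripConst A (R.card + S.card) * Real.sqrt (∑ i, (x i) ^ 2) := this
      _ = ripConst A (R.card + S.card) * l2norm x := by rw [l2norm]

end
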